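/- arXiv:2505.04218 — 2 statements merged into one kernel-verified Lean document; each statement's English description precedes it below -/
import Mathlib

section
/- Let P be a Markov kernel on a measurable space (X, 𝔛) and V : X → [1, ∞) a measurable function satisfying the drift condition PV(x) ≤ λV(x) + b·𝟙_D(x) for all x, with λ ∈ (0,1), b ≥ 0, and D ∈ 𝔛. Then for β = 1/λ and every x ∈ X, E_x[β^{σ_D}] ≤ V(x) + bβ, where σ_D = inf{n ≥ 1 : X_n ∈ D} is the first return time to D. -/
open MeasureTheory ProbabilityTheory
open scoped ENNReal

/-- `a ^ n` for an extended natural exponent (equals `a^n` for finite `n` and, for `a ≥ 1`,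
`sup_k a^k` when `n = ∞`). -/
noncomputable def epow (a : ℝ≥0∞) (n : ℕ∞) : ℝ≥0∞ := ⨆ (k : ℕ) (_ : (k : ℕ∞) ≤ n), a ^ k

/-- First return time to `D` of a trajectory `ω`, as an extended natural number. -/
noncomputable def returnTime {S : Type*} (D : Set S) (ω : ℕ → S) : ℕ∞ :=
  ⨅ (n : ℕ) (_ : 1 ≤ n ∧ ω n ∈ D), (n : ℕ∞)

/-- If a Markov chain with kernel `P` satisfies the geometric drift condition
`PV ≤ λV + b·𝟙_D` with `V ≥ 1`, `λ ∈ (0,1)`, `b ≥ 0`, then with `β = 1/λ`,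
`E_x[β^{σ_D}] ≤ V(x) + bβ` for every starting point `x`. -/
theorem stmt_8 {S : Type*} [MeasurableSpace S] (P : Kernel S S) [IsMarkovKernel P]
    (Pr : S → Measure (ℕ → S)) (hprob : ∀ x, IsProbabilityMeasure (Pr x))
    (hstart : ∀ x, (Pr x) {ω | ω 0 = x} = 1)
    (hMarkov : ∀ (x : S) (n : ℕ) (f : S → ℝ≥0∞), Measurable f →
      ∀ B : Set (Fin (n + 1) → S), MeasurableSet B →
        ∫⁻ ω in {ω : ℕ → S | (fun i : Fin (n + 1) => ω i) ∈ B}, f (ω (n + 1)) ∂(Pr x) =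
          ∫⁻ ω in {ω : ℕ → S | (fun i : Fin (n + 1) => ω i) ∈ B},
            ∫⁻ y, f y ∂(P (ω n)) ∂(Pr x))
    (V : S → ℝ≥0∞) (hV : Measurable V) (hV1 : ∀ s, 1 ≤ V s)
    (lam b : ℝ) (hlam : lam ∈ Set.Ioo (0 : ℝ) 1) (hb : 0 ≤ b)
    (D : Set S) (hD : MeasurableSet D)
    (hdrift : ∀ x, ∫⁻ y, V y ∂(P x) ≤
      ENNReal.ofReal lam * V x + ENNReal.ofReal b * D.indicator (1 : S → ℝ≥0∞) x) :
    ∀ x, ∫⁻ ω, epow (ENNReal.ofReal (1 / lam)) (returnTime D ω) ∂(Pr x) ≤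
      V x + ENNReal.ofReal b * ENNReal.ofReal (1 / lam) := by
  intro x
  have := hprob x
  set β : ℝ≥0∞ := ENNReal.ofReal (1 / lam) with hβdef
  set σ : (ℕ → S) → ℕ∞ := returnTime D with hσdef
  set μ : Measure (ℕ → S) := Pr x with hμdef
  have hlam0 : 0 < lam := hlam.1
  have hβlam : β * ENNReal.ofReal lam = 1 := by
    rw [hβdef, ← ENNReal.ofReal_mul (by positivity), one_div,
      inv_mul_cancel₀ hlam0.ne', ENNReal.ofReal_one]
  have hβ1 : (1 : ℝ≥0∞) ≤ β := by
    rw [hβdef, ENNReal.one_le_ofReal, le_div_iff₀ hlam0, one_mul]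
    exact hlam.2.le
  -- the decreasing family of "no return up to time n" events
  set T : ℕ → Set (ℕ → S) := fun n => {ω | ∀ k, 1 ≤ k → k ≤ n → ω k ∉ D} with hTdef
  have hTmeas : ∀ n, MeasurableSet (T n) := by
    intro n
    have : T n = ⋂ k : ℕ, {ω : ℕ → S | 1 ≤ k → k ≤ n → ω k ∉ D} := by
      ext ω; simp [hTdef, Set.mem_iInter]
    rw [this]
    refine MeasurableSet.iInter fun k => ?_
    by_cases h1 : 1 ≤ k
    · by_cases h2 : k ≤ n
      · have : {ω : ℕ → S | 1 ≤ k → k ≤ n → ω k ∉ D} = (fun ω : ℕ → S => ω k) ⁻¹' Dᶜ := by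
          ext ω; simp [h1, h2]
        rw [this]; exact (measurable_pi_apply k) hD.compl
      · have : {ω : ℕ → S | 1 ≤ k → k ≤ n → ω k ∉ D} = Set.univ := by
          ext ω; simp [h2]
        rw [this]; exact MeasurableSet.univ
    · have : {ω : ℕ → S | 1 ≤ k → k ≤ n → ω k ∉ D} = Set.univ := by
        ext ω; simp [h1]
      rw [this]; exact MeasurableSet.univ
  have hTsub : ∀ n, T (n + 1) ⊆ T n := by
    intro n ω hω k h1 h2
    exact hω k h1 (h2.trans (Nat.le_succ n))
  -- characterization of the return time
  have hσT : ∀ (ω : ℕ → S) (n : ℕ), (((n + 1 : ℕ) : ℕ∞) ≤ σ ω) ↔ ω ∈ T n := by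
    intro ω n
    rw [hσdef, returnTime]
    constructor
    · intro h k h1 h2 hk
      have := le_iInf_iff.1 h k
      have h3 := le_iInf_iff.1 this ⟨h1, hk⟩
      have : n + 1 ≤ k := by exact_mod_cast h3
      omega
    · intro hω
      refine le_iInf fun m => le_iInf fun hm => ?_
      have : ¬ m ≤ n := fun hle => hω m hm.1 hle hm.2
      exact_mod_cast (by omega : n + 1 ≤ m)
  have hσ1 : ∀ ω, (1 : ℕ∞) ≤ σ ω := by
    intro ω
    rw [hσdef, returnTime]
    refine le_iInf fun m => le_iInf fun hm => ?_
    exact_mod_cast hm.1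
  -- Markov property specialized to the sets T n
  have hstep0 : ∀ n : ℕ, ∫⁻ ω in T n, V (ω (n + 1)) ∂μ =
      ∫⁻ ω in T n, ∫⁻ y, V y ∂(P (ω n)) ∂μ := by
    intro n
    set B : Set (Fin (n + 1) → S) := {v | ∀ i : Fin (n + 1), 1 ≤ (i : ℕ) → v i ∉ D} with hBdef
    have hB : MeasurableSet B := by
      have : B = ⋂ i : Fin (n + 1), {v : Fin (n + 1) → S | 1 ≤ (i : ℕ) → v i ∉ D} := by
        ext v; simp [hBdef]
      rw [this]
      refine MeasurableSet.iInter fun i => ?_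
      by_cases h1 : 1 ≤ (i : ℕ)
      · have : {v : Fin (n + 1) → S | 1 ≤ (i : ℕ) → v i ∉ D}
            = (fun v : Fin (n + 1) → S => v i) ⁻¹' Dᶜ := by ext v; simp [h1]
        rw [this]; exact (measurable_pi_apply i) hD.compl
      · have : {v : Fin (n + 1) → S | 1 ≤ (i : ℕ) → v i ∉ D} = Set.univ := by
          ext v; simp [h1]
        rw [this]; exact MeasurableSet.univ
    have hTB : T n = {ω : ℕ → S | (fun i : Fin (n + 1) => ω i) ∈ B} := by
      ext ω
      constructor
      · intro hω i h1
        exact hω i h1 (Nat.lt_succ_iff.1 i.isLt)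
      · intro hω k h1 h2
        exact hω ⟨k, Nat.lt_succ_iff.2 h2⟩ h1
    rw [hTB]
    exact hMarkov x n V hV B hB
  -- the key quantities
  set A : ℕ → ℝ≥0∞ := fun n => ∫⁻ ω in T n, β ^ (n + 1) * V (ω (n + 1)) ∂μ with hAdef
  set C : ℕ → ℝ≥0∞ := fun n => ∫⁻ ω in T n \ T (n + 1), β ^ (n + 1) * V (ω (n + 1)) ∂μ
    with hCdef
  have hVn : ∀ m : ℕ, Measurable fun ω : ℕ → S => V (ω m) :=
    fun m => hV.comp (measurable_pi_apply m)
  have hmeasV : ∀ n : ℕ, Measurable fun ω : ℕ → S => β ^ (n + 1) * V (ω (n + 1)) :=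
    fun n => measurable_const.mul (hVn (n + 1))
  -- decrement step : A (n+1) + C n ≤ A n
  have hstep : ∀ n : ℕ, A (n + 1) + C n ≤ A n := by
    intro n
    have h1 : A (n + 1) ≤ ∫⁻ ω in T (n + 1), β ^ (n + 1) * V (ω (n + 1)) ∂μ := by
      have e1 : A (n + 1) = β ^ (n + 2) * ∫⁻ ω in T (n + 1), V (ω (n + 2)) ∂μ := by
        simp only [hAdef]
        rw [lintegral_const_mul _ (hVn (n + 2))]
      have e2 : ∫⁻ ω in T (n + 1), V (ω (n + 2)) ∂μ
          ≤ ENNReal.ofReal lam * ∫⁻ ω in T (n + 1), V (ω (n + 1)) ∂μ := by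
        rw [hstep0 (n + 1)]
        rw [← lintegral_const_mul _ (hVn (n + 1))]
        refine setLIntegral_mono (measurable_const.mul (hVn (n + 1)))
          fun ω hω => ?_
        have hD0 : ω (n + 1) ∉ D := hω (n + 1) (by omega) (by omega)
        calc ∫⁻ y, V y ∂(P (ω (n + 1)))
            ≤ ENNReal.ofReal lam * V (ω (n + 1))
              + ENNReal.ofReal b * D.indicator (1 : S → ℝ≥0∞) (ω (n + 1)) :=
              hdrift (ω (n + 1))
          _ = ENNReal.ofReal lam * V (ω (n + 1)) := by
              rw [Set.indicator_of_notMem hD0]; simp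
      calc A (n + 1) = β ^ (n + 2) * ∫⁻ ω in T (n + 1), V (ω (n + 2)) ∂μ := e1
        _ ≤ β ^ (n + 2) * (ENNReal.ofReal lam * ∫⁻ ω in T (n + 1), V (ω (n + 1)) ∂μ) :=
            mul_le_mul_right e2 _
        _ = (β ^ (n + 1) * (β * ENNReal.ofReal lam)) * ∫⁻ ω in T (n + 1), V (ω (n + 1)) ∂μ := by
            ring_nf
        _ = β ^ (n + 1) * ∫⁻ ω in T (n + 1), V (ω (n + 1)) ∂μ := by rw [hβlam, mul_one]
        _ = ∫⁻ ω in T (n + 1), β ^ (n + 1) * V (ω (n + 1)) ∂μ := by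
            rw [← lintegral_const_mul _ (hVn (n + 1))]
    have h2 : (∫⁻ ω in T (n + 1), β ^ (n + 1) * V (ω (n + 1)) ∂μ) + C n = A n := by
      simp only [hCdef, hAdef]
      rw [← lintegral_union ((hTmeas n).diff (hTmeas (n + 1))) Set.disjoint_sdiff_right,
        Set.union_diff_cancel (hTsub n)]
    calc A (n + 1) + C n ≤ (∫⁻ ω in T (n + 1), β ^ (n + 1) * V (ω (n + 1)) ∂μ) + C n :=
          add_le_add_left h1 _
      _ = A n := h2
  -- telescoping
  have htel : ∀ N : ℕ, A N + ∑ n ∈ Finset.range N, C n ≤ A 0 := by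
    intro N
    induction N with
    | zero => simp
    | succ N ih =>
        calc A (N + 1) + ∑ n ∈ Finset.range (N + 1), C n
            = (A (N + 1) + C N) + ∑ n ∈ Finset.range N, C n := by
              rw [Finset.sum_range_succ]; ring
          _ ≤ A N + ∑ n ∈ Finset.range N, C n := add_le_add_left (hstep N) _
          _ ≤ A 0 := ih
  -- bound on A 0
  have hA0 : A 0 ≤ V x + ENNReal.ofReal b * β := by
    have hT0 : T 0 = Set.univ := by
      ext ω
      simp only [hTdef, Set.mem_setOf_eq, Set.mem_univ, iff_true]
      intro k h1 h2
      omega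
    have e1 : A 0 = β * ∫⁻ ω, ∫⁻ y, V y ∂(P (ω 0)) ∂μ := by
      simp only [hAdef, zero_add, pow_one]
      rw [lintegral_const_mul _ (hVn 1), hstep0 0, hT0, MeasureTheory.setLIntegral_univ]
    have e2 : ∫⁻ ω, ∫⁻ y, V y ∂(P (ω 0)) ∂μ ≤ ENNReal.ofReal lam * V x + ENNReal.ofReal b := by
      set c : ℝ≥0∞ := ENNReal.ofReal lam * V x + ENNReal.ofReal b with hc
      have hgm : Measurable fun ω : ℕ → S => ∫⁻ y, V y ∂(P (ω 0)) :=
        (Measurable.lintegral_kernel hV).comp (measurable_pi_apply 0)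
      have hsub : {ω : ℕ → S | ω 0 = x} ⊆ {ω : ℕ → S | (∫⁻ y, V y ∂(P (ω 0))) ≤ c} := by
        intro ω hω
        simp only [Set.mem_setOf_eq] at hω ⊢
        rw [hω]
        refine (hdrift x).trans (add_le_add_right ?_ _)
        by_cases hx : x ∈ D
        · simp [Set.indicator_of_mem hx]
        · simp [Set.indicator_of_notMem hx]
      have hE : MeasurableSet {ω : ℕ → S | (∫⁻ y, V y ∂(P (ω 0))) ≤ c} :=
        measurableSet_le hgm measurable_const
      have hE1 : μ {ω : ℕ → S | (∫⁻ y, V y ∂(P (ω 0))) ≤ c} = 1 :=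
        le_antisymm prob_le_one (le_trans (hstart x).ge (measure_mono hsub))
      have hae : ∀ᵐ ω ∂μ, (∫⁻ y, V y ∂(P (ω 0))) ≤ c := by
        rw [ae_iff]
        have : {ω : ℕ → S | ¬ (∫⁻ y, V y ∂(P (ω 0))) ≤ c}
            = {ω : ℕ → S | (∫⁻ y, V y ∂(P (ω 0))) ≤ c}ᶜ := by ext ω; simp
        rw [this, measure_compl hE (by simp), hE1, measure_univ, tsub_self]
      calc ∫⁻ ω, ∫⁻ y, V y ∂(P (ω 0)) ∂μ ≤ ∫⁻ _, c ∂μ := lintegral_mono_ae (hae.mono fun ω h => h)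
        _ = c := by rw [lintegral_const, measure_univ, mul_one]
    calc A 0 = β * ∫⁻ ω, ∫⁻ y, V y ∂(P (ω 0)) ∂μ := e1
      _ ≤ β * (ENNReal.ofReal lam * V x + ENNReal.ofReal b) := mul_le_mul_right e2 _
      _ = (β * ENNReal.ofReal lam) * V x + ENNReal.ofReal b * β := by ring
      _ = V x + ENNReal.ofReal b * β := by rw [hβlam, one_mul]
  -- the truncated exponentials
  set d : ℕ → (ℕ → S) → ℝ≥0∞ :=
    fun N ω => ⨆ (k : ℕ) (_ : k ≤ N ∧ (k : ℕ∞) ≤ σ ω), β ^ k with hddef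
  have hdmono : Monotone d := by
    refine monotone_nat_of_le_succ fun N ω => ?_
    refine iSup_le fun k => iSup_le fun hk => ?_
    exact le_iSup_of_le k (le_iSup_of_le ⟨hk.1.trans (Nat.le_succ N), hk.2⟩ le_rfl)
  have hσset : ∀ k : ℕ, MeasurableSet {ω : ℕ → S | (k : ℕ∞) ≤ σ ω} := by
    intro k
    cases k with
    | zero => simp
    | succ j =>
        have : {ω : ℕ → S | ((j + 1 : ℕ) : ℕ∞) ≤ σ ω} = T j := by
          ext ω; exact hσT ω j
        rw [this]; exact hTmeas j
  have hdmeas : ∀ N, Measurable (d N) := by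
    intro N
    refine Measurable.iSup fun k => ?_
    by_cases hkN : k ≤ N
    · have : (fun ω => ⨆ (_ : k ≤ N ∧ (k : ℕ∞) ≤ σ ω), β ^ k)
          = Set.indicator {ω : ℕ → S | (k : ℕ∞) ≤ σ ω} (fun _ => β ^ k) := by
        ext ω
        by_cases h : ω ∈ {ω : ℕ → S | (k : ℕ∞) ≤ σ ω}
        · rw [Set.indicator_of_mem h, iSup_pos ⟨hkN, h⟩]
        · rw [Set.indicator_of_notMem h]
          exact iSup_neg (fun hh => h hh.2)
      rw [this]
      exact measurable_const.indicator (hσset k)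
    · have : (fun ω => ⨆ (_ : k ≤ N ∧ (k : ℕ∞) ≤ σ ω), β ^ k) = fun _ => 0 := by
        ext ω
        rw [iSup_neg (fun hh => hkN hh.1)]
        exact bot_eq_zero
      rw [this]; exact measurable_const
  -- pointwise bound for d (N+1)
  have hdle : ∀ (N : ℕ) (ω : ℕ → S), d (N + 1) ω ≤
      (∑ m ∈ Finset.range N, β ^ (m + 1) * Set.indicator (T m \ T (m + 1)) 1 ω)
        + β ^ (N + 1) * Set.indicator (T N) 1 ω := by
    intro N ω
    by_cases hN : ((N + 1 : ℕ) : ℕ∞) ≤ σ ω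
    · have hωT : ω ∈ T N := (hσT ω N).1 hN
      have : d (N + 1) ω ≤ β ^ (N + 1) :=
        iSup_le fun k => iSup_le fun hk => pow_le_pow_right' hβ1 hk.1
      calc d (N + 1) ω ≤ β ^ (N + 1) := this
        _ = β ^ (N + 1) * Set.indicator (T N) 1 ω := by
            rw [Set.indicator_of_mem hωT]; simp
        _ ≤ _ := le_add_self
    · -- σ ω is finite, equal to some m+1 ≤ N
      have hlt : σ ω < ((N + 1 : ℕ) : ℕ∞) := lt_of_not_ge hN
      obtain ⟨n, hn⟩ : ∃ n : ℕ, σ ω = (n : ℕ∞) := by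
        cases hσn : σ ω with
        | top => rw [hσn] at hlt; exact absurd hlt (by simp)
        | coe n => exact ⟨n, rfl⟩
      have hnN : n ≤ N := by
        rw [hn] at hlt
        have : n < N + 1 := by exact_mod_cast hlt
        omega
      have hn1 : 1 ≤ n := by
        have := hσ1 ω
        rw [hn] at this
        exact_mod_cast this
      obtain ⟨m, rfl⟩ : ∃ m, n = m + 1 := ⟨n - 1, by omega⟩
      have hmem : ω ∈ T m \ T (m + 1) := by
        constructor
        · exact (hσT ω m).1 (by rw [hn])
        · intro hc
          have := (hσT ω (m + 1)).2 hc
          rw [hn] at this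
          have : (m + 2 : ℕ) ≤ m + 1 := by exact_mod_cast this
          omega
      have hdb : d (N + 1) ω ≤ β ^ (m + 1) := by
        refine iSup_le fun k => iSup_le fun hk => ?_
        have : (k : ℕ∞) ≤ ((m + 1 : ℕ) : ℕ∞) := hk.2.trans_eq hn
        exact pow_le_pow_right' hβ1 (by exact_mod_cast this)
      have hterm : β ^ (m + 1) * Set.indicator (T m \ T (m + 1)) 1 ω = β ^ (m + 1) := by
        rw [Set.indicator_of_mem hmem]; simp
      have hmN : m ∈ Finset.range N := Finset.mem_range.2 (by omega)
      calc d (N + 1) ω ≤ β ^ (m + 1) := hdb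
        _ = β ^ (m + 1) * Set.indicator (T m \ T (m + 1)) 1 ω := hterm.symm
        _ ≤ ∑ m ∈ Finset.range N, β ^ (m + 1) * Set.indicator (T m \ T (m + 1)) 1 ω :=
            Finset.single_le_sum
              (f := fun i => β ^ (i + 1) * Set.indicator (T i \ T (i + 1)) 1 ω)
              (fun i _ => zero_le) hmN
        _ ≤ _ := le_add_right le_rfl
  -- integral bound for d (N+1)
  have hdint : ∀ N : ℕ, ∫⁻ ω, d (N + 1) ω ∂μ ≤ V x + ENNReal.ofReal b * β := by
    intro N
    have h1 : ∫⁻ ω, d (N + 1) ω ∂μ ≤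
        (∑ m ∈ Finset.range N, β ^ (m + 1) * μ (T m \ T (m + 1))) + β ^ (N + 1) * μ (T N) := by
      calc ∫⁻ ω, d (N + 1) ω ∂μ
          ≤ ∫⁻ ω, (∑ m ∈ Finset.range N, β ^ (m + 1) * Set.indicator (T m \ T (m + 1)) 1 ω)
            + β ^ (N + 1) * Set.indicator (T N) 1 ω ∂μ := lintegral_mono (hdle N)
        _ = (∑ m ∈ Finset.range N, ∫⁻ ω, β ^ (m + 1) * Set.indicator (T m \ T (m + 1)) 1 ω ∂μ)
            + ∫⁻ ω, β ^ (N + 1) * Set.indicator (T N) 1 ω ∂μ := by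
            rw [lintegral_add_right, lintegral_finset_sum]
            · intro m _
              exact measurable_const.mul (measurable_one.indicator
                ((hTmeas m).diff (hTmeas (m + 1))))
            · exact measurable_const.mul (measurable_one.indicator (hTmeas N))
        _ = (∑ m ∈ Finset.range N, β ^ (m + 1) * μ (T m \ T (m + 1))) + β ^ (N + 1) * μ (T N) := by
            congr 1
            · refine Finset.sum_congr rfl fun m _ => ?_
              rw [lintegral_const_mul _ (measurable_one.indicator
                ((hTmeas m).diff (hTmeas (m + 1)))),
                lintegral_indicator ((hTmeas m).diff (hTmeas (m + 1)))]
              simp only [Pi.one_apply, setLIntegral_one]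
            · rw [lintegral_const_mul _ (measurable_one.indicator (hTmeas N)),
                lintegral_indicator (hTmeas N)]
              simp only [Pi.one_apply, setLIntegral_one]
    have h2 : ∀ m : ℕ, β ^ (m + 1) * μ (T m \ T (m + 1)) ≤ C m := by
      intro m
      simp only [hCdef]
      calc β ^ (m + 1) * μ (T m \ T (m + 1))
          = ∫⁻ _ in T m \ T (m + 1), β ^ (m + 1) ∂μ := (setLIntegral_const _ _).symm
        _ ≤ ∫⁻ ω in T m \ T (m + 1), β ^ (m + 1) * V (ω (m + 1)) ∂μ :=
            setLIntegral_mono (hmeasV m) fun ω _ =>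
              le_mul_of_one_le_right' (hV1 _) |>.trans_eq rfl
    have h3 : β ^ (N + 1) * μ (T N) ≤ A N := by
      simp only [hAdef]
      calc β ^ (N + 1) * μ (T N) = ∫⁻ _ in T N, β ^ (N + 1) ∂μ := (setLIntegral_const _ _).symm
        _ ≤ ∫⁻ ω in T N, β ^ (N + 1) * V (ω (N + 1)) ∂μ :=
            setLIntegral_mono (hmeasV N) fun ω _ =>
              le_mul_of_one_le_right' (hV1 _) |>.trans_eq rfl
    calc ∫⁻ ω, d (N + 1) ω ∂μ
        ≤ (∑ m ∈ Finset.range N, β ^ (m + 1) * μ (T m \ T (m + 1))) + β ^ (N + 1) * μ (T N) := h1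
      _ ≤ (∑ m ∈ Finset.range N, C m) + A N :=
          add_le_add (Finset.sum_le_sum fun m _ => h2 m) h3
      _ = A N + ∑ m ∈ Finset.range N, C m := by ring
      _ ≤ A 0 := htel N
      _ ≤ V x + ENNReal.ofReal b * β := hA0
  -- conclusion
  have hpt : ∀ ω, epow β (σ ω) ≤ ⨆ N, d N ω := by
    intro ω
    rw [epow]
    refine iSup_le fun k => iSup_le fun hk => ?_
    exact le_iSup_of_le k (le_iSup_of_le k (le_iSup_of_le ⟨le_rfl, hk⟩ le_rfl))
  calc ∫⁻ ω, epow β (σ ω) ∂μ ≤ ∫⁻ ω, ⨆ N, d N ω ∂μ := lintegral_mono hpt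
    _ = ⨆ N, ∫⁻ ω, d N ω ∂μ := lintegral_iSup hdmeas hdmono
    _ ≤ V x + ENNReal.ofReal b * β := by
        refine iSup_le fun N => ?_
        calc ∫⁻ ω, d N ω ∂μ ≤ ∫⁻ ω, d (N + 1) ω ∂μ := lintegral_mono (hdmono (Nat.le_succ N))
          _ ≤ V x + ENNReal.ofReal b * β := hdint N
end

section
/- Let P be a Markov kernel on (X, 𝔛) with an (1, εν)-small set C where ν is a probability measure with ν(C) = 1 and ε ∈ (0,1), and let P̌ be the split kernel on X̌ = X × {0,1} defined via the residual kernel R and Bernoulli measure b_ε = (1−ε)δ₀ + εδ₁. Then if λ is a P-invariant nonnegative measure on X, the product measure λ ⊗ b_ε is P̌-invariant. -/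
open MeasureTheory ProbabilityTheory
open scoped ENNReal

/-- Bernoulli distribution `b_ε = (1−ε)δ_false + εδ_true` on `{0,1} ≃ Bool`. -/
noncomputable def bern (ε : ℝ) : Measure Bool :=
  ENNReal.ofReal (1 - ε) • Measure.dirac false + ENNReal.ofReal ε • Measure.dirac true

open Classical in
/-- First marginal `Q` of the split kernel: on `C × {0}` the residual kernel
`R(x,·) = (P(x,·) − εν)/(1−ε)`, on `C × {1}` the measure `ν`, off `C` the kernel `P`. -/
noncomputable def splitQ {X : Type*} [MeasurableSpace X] (P : Kernel X X) (ν : Measure X)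
    (ε : ℝ) (C : Set X) : X × Bool → Measure X := fun p =>
  if p.1 ∈ C then
    (if p.2 then ν else (ENNReal.ofReal (1 - ε))⁻¹ • (P p.1 - ENNReal.ofReal ε • ν))
  else P p.1

/-- The split kernel `P̌(x,d;·) = Q(x,d;·) ⊗ b_ε` on `X × {0,1}`. -/
noncomputable def splitKernel {X : Type*} [MeasurableSpace X] (P : Kernel X X) (ν : Measure X)
    (ε : ℝ) (C : Set X) : X × Bool → Measure (X × Bool) := fun p =>
  (splitQ P ν ε C p).prod (bern ε)

/-- If `λ` is a `P`-invariant nonnegative (σ-finite) measure, then `λ ⊗ b_ε` is invariant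
for the split kernel `P̌`. -/
theorem stmt_17 {X : Type*} [MeasurableSpace X] (P : Kernel X X) [IsMarkovKernel P]
    (ν : Measure X) [IsProbabilityMeasure ν] (ε : ℝ) (hε : ε ∈ Set.Ioo (0 : ℝ) 1)
    (C : Set X) (hC : MeasurableSet C) (hνC : ν C = 1)
    (hsmall : ∀ x ∈ C, ∀ A : Set X, MeasurableSet A → ENNReal.ofReal ε * ν A ≤ P x A)
    (lam : Measure X) [SigmaFinite lam]
    (hinv : ∀ A : Set X, MeasurableSet A → ∫⁻ x, P x A ∂lam = lam A) :
    ∀ B : Set (X × Bool), MeasurableSet B →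
      ∫⁻ p, splitKernel P ν ε C p B ∂(lam.prod (bern ε)) = (lam.prod (bern ε)) B := by
  classical
  intro B hB
  obtain ⟨hε0, hε1⟩ := hε
  have h1ε : (0:ℝ) < 1 - ε := by linarith
  set e : ℝ≥0∞ := ENNReal.ofReal ε with he
  set e' : ℝ≥0∞ := ENNReal.ofReal (1 - ε) with he'
  have he'0 : e' ≠ 0 := (ENNReal.ofReal_pos.mpr h1ε).ne'
  have he'top : e' ≠ ∞ := ENNReal.ofReal_ne_top
  have hetop : e ≠ ∞ := ENNReal.ofReal_ne_top
  have hee' : e' + e = 1 := by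
    rw [he, he', ← ENNReal.ofReal_add (by linarith) hε0.le]
    norm_num
  have hbern_univ : bern ε Set.univ = 1 := by
    simp only [bern, Measure.add_apply, Measure.smul_apply, Measure.dirac_apply_of_mem
      (Set.mem_univ _), smul_eq_mul, mul_one]
    exact hee'
  haveI : IsProbabilityMeasure (bern ε) := ⟨hbern_univ⟩
  -- the slice function
  set f : X → ℝ≥0∞ := fun x => bern ε (Prod.mk x ⁻¹' B) with hfdef
  have hfm : Measurable f := measurable_measure_prodMk_left hB
  have hfle : ∀ x, f x ≤ 1 := fun x => by
    calc f x ≤ bern ε Set.univ := measure_mono (Set.subset_univ _)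
    _ = 1 := hbern_univ
  have hsub : ∀ x ∈ C, e • ν ≤ P x := by
    intro x hx
    refine Measure.le_iff.mpr fun s hs => ?_
    simpa using hsmall x hx s hs
  set g : X → ℝ≥0∞ := fun x => ∫⁻ y, f y ∂(P x) with hgdef
  have hgm : Measurable g := Measure.measurable_lintegral hfm |>.comp (P.measurable)
  set c : ℝ≥0∞ := ∫⁻ y, f y ∂ν with hcdef
  have hcle : c ≤ 1 := by
    calc c ≤ ∫⁻ _, 1 ∂ν := lintegral_mono hfle
    _ = 1 := by simp
  have hectop : e * c ≠ ∞ := ENNReal.mul_ne_top hetop (lt_of_le_of_lt hcle (by norm_num)).ne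
  have hec : ∀ x ∈ C, e * c ≤ g x := by
    intro x hx
    calc e * c = ∫⁻ y, f y ∂(e • ν) := by rw [lintegral_smul_measure, smul_eq_mul]
    _ ≤ g x := lintegral_mono' (hsub x hx) le_rfl
  haveI hfin : IsFiniteMeasure ((e : ℝ≥0∞) • ν) :=
    ⟨by rw [Measure.smul_apply, smul_eq_mul]; exact ENNReal.mul_lt_top hetop.lt_top (measure_lt_top ν _)⟩
  -- pointwise identification of the integrand
  set H : X × Bool → ℝ≥0∞ := fun p =>
    if p.1 ∈ C then (if p.2 then c else e'⁻¹ * (g p.1 - e * c)) else g p.1 with hHdef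
  have hH : ∀ p : X × Bool, splitKernel P ν ε C p B = H p := by
    rintro ⟨x, d⟩
    rw [splitKernel, Measure.prod_apply hB]
    simp only [splitQ, hHdef]
    by_cases hx : x ∈ C
    · simp only [hx, if_true]
      cases d
      · simp only [Bool.false_eq_true, if_false]
        rw [lintegral_smul_measure]
        congr 1
        have key : (∫⁻ y, f y ∂(P x - e • ν)) + e * c = g x := by
          rw [← smul_eq_mul, ← lintegral_smul_measure, ← lintegral_add_measure,
            Measure.sub_add_cancel_of_le (hsub x hx)]
        exact ENNReal.eq_sub_of_add_eq hectop key
      · simp only [if_true]; rfl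
    · simp only [hx, if_false]; rfl
  have hHm : Measurable H := by
    refine Measurable.ite (hC.preimage measurable_fst) ?_ (hgm.comp measurable_fst)
    refine Measurable.ite ?_ measurable_const ?_
    · exact measurable_snd (measurableSet_singleton true)
    · exact (((hgm.comp measurable_fst).sub measurable_const).const_mul _)
  -- compute the integral
  have hbern_int : ∀ h : Bool → ℝ≥0∞, ∫⁻ d, h d ∂(bern ε) = e' * h false + e * h true := by
    intro h
    rw [bern, lintegral_add_measure, lintegral_smul_measure, lintegral_smul_measure,
      lintegral_dirac, lintegral_dirac]
    rfl
  calc ∫⁻ p, splitKernel P ν ε C p B ∂(lam.prod (bern ε))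
      = ∫⁻ p, H p ∂(lam.prod (bern ε)) := lintegral_congr hH
    _ = ∫⁻ x, ∫⁻ d, H (x, d) ∂(bern ε) ∂lam := lintegral_prod _ hHm.aemeasurable
    _ = ∫⁻ x, g x ∂lam := by
        refine lintegral_congr fun x => ?_
        rw [hbern_int]
        by_cases hx : x ∈ C
        · simp only [hHdef, hx, if_true, Bool.false_eq_true, if_false]
          rw [← mul_assoc, ENNReal.mul_inv_cancel he'0 he'top, one_mul,
            tsub_add_cancel_of_le (hec x hx)]
        · simp only [hHdef, hx, if_false]
          rw [← add_mul, hee', one_mul]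
    _ = ∫⁻ y, f y ∂lam := by
        have hbind : lam.bind (fun x => P x) = lam := by
          ext A hA
          rw [Measure.bind_apply hA P.measurable.aemeasurable]
          exact hinv A hA
        calc ∫⁻ x, g x ∂lam
            = ∫⁻ y, f y ∂(lam.bind fun x => P x) :=
              (Measure.lintegral_bind P.measurable.aemeasurable hfm.aemeasurable).symm
          _ = ∫⁻ y, f y ∂lam := by rw [hbind]
    _ = (lam.prod (bern ε)) B := (Measure.prod_apply hB).symm
end
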